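/- arXiv:2301.07396 — 2 statements merged into one kernel-verified Lean document; each statement's English description precedes it below -/
import Mathlib

section
/- The function 𝔧ₙ(x) = αₙ·|K|^{−(n−2)/4}·((n−2)/2)·(|x|² + 1 − D²)·(|x̃|² + (xₙ + D)² − 1)^{−n/2} solves the linearized problem: −cₙ·Δ𝔧ₙ + ((n+2)/(n−2))·|K|·U^{4/(n−2)}·𝔧ₙ = 0 in ℝⁿ₊, and (2/(n−2))·∂𝔧ₙ/∂ν(x̃,0) = (n/(n−2))·H·U(x̃,0)^{2/(n−2)}·𝔧ₙ(x̃,0) for all x̃ ∈ ℝ^{n−1}, where ∂/∂ν = −∂/∂xₙ. -/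
open Real MeasureTheory

noncomputable section

/-- `αₙ = (4n(n−1))^((n−2)/4)`. -/
def alphaN (n : ℕ) : ℝ := (4 * (n : ℝ) * ((n : ℝ) - 1)) ^ (((n : ℝ) - 2) / 4)

/-- `cₙ = 4(n−1)/(n−2)`. -/
def cN (n : ℕ) : ℝ := 4 * ((n : ℝ) - 1) / ((n : ℝ) - 2)

/-- Points of `ℝⁿ = ℝ^{n-1} × ℝ`, written as pairs `(y, xₙ)`. -/
abbrev HalfPt (n : ℕ) := (Fin (n - 1) → ℝ) × ℝ

/-- `|y|² + (xₙ + D)² − 1`. -/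
def QD (n : ℕ) (D : ℝ) (x : HalfPt n) : ℝ := (∑ i, (x.1 i) ^ 2) + (x.2 + D) ^ 2 - 1

/-- The standard bubble `U(x) = αₙ |K|^{-(n-2)/4} (|y|² + (xₙ+D)² − 1)^{-(n-2)/2}`. -/
def bubbleU (n : ℕ) (K D : ℝ) (x : HalfPt n) : ℝ :=
  alphaN n * |K| ^ (-(((n : ℝ) - 2) / 4)) * QD n D x ^ (-(((n : ℝ) - 2) / 2))

/-- Second directional derivative of `f` in the direction `v` at `x`. -/
def dd2 (n : ℕ) (f : HalfPt n → ℝ) (v : HalfPt n) (x : HalfPt n) : ℝ :=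
  fderiv ℝ (fun y => fderiv ℝ f y v) x v

/-- Euclidean Laplacian: sum of the second partial derivatives along the coordinate
directions of `ℝ^{n-1} × ℝ`. -/
def lap (n : ℕ) (f : HalfPt n → ℝ) (x : HalfPt n) : ℝ :=
  (∑ i : Fin (n - 1), dd2 n f (Pi.single i 1, 0) x) + dd2 n f ((0 : Fin (n - 1) → ℝ), 1) x

/-- The bubble family `U_{δ,x₀(δ)}` with `x₀(δ) = (t, −Dδ)`. -/
def bubbleFam (n : ℕ) (K D δ : ℝ) (t : Fin (n - 1) → ℝ) (x : HalfPt n) : ℝ :=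
  alphaN n * |K| ^ (-(((n : ℝ) - 2) / 4)) * δ ^ (((n : ℝ) - 2) / 2) *
    ((∑ i, (x.1 i - t i) ^ 2) + (x.2 + D * δ) ^ 2 - δ ^ 2) ^ (-(((n : ℝ) - 2) / 2))

/-- `𝔧ᵢ`, `i = 1, …, n−1`: the tangential derivatives of the bubble. -/
def jTan (n : ℕ) (K D : ℝ) (i : Fin (n - 1)) (x : HalfPt n) : ℝ :=
  alphaN n * |K| ^ (-(((n : ℝ) - 2) / 4)) * (2 - (n : ℝ)) * x.1 i * QD n D x ^ (-((n : ℝ) / 2))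

/-- `𝔧ₙ`. -/
def jNor (n : ℕ) (K D : ℝ) (x : HalfPt n) : ℝ :=
  alphaN n * |K| ^ (-(((n : ℝ) - 2) / 4)) * (((n : ℝ) - 2) / 2) *
    ((∑ i, (x.1 i) ^ 2) + x.2 ^ 2 + 1 - D ^ 2) * QD n D x ^ (-((n : ℝ) / 2))

/-- All the `𝔧ᵢ`, `i = 1, …, n`, indexed by `Fin n`. -/
def jAll (n : ℕ) (K D : ℝ) (i : Fin n) (x : HalfPt n) : ℝ :=
  if h : (i : ℕ) < n - 1 then jTan n K D ⟨(i : ℕ), h⟩ x else jNor n K D x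

/-- `I^n_{n-1} = ∫₀^∞ ρⁿ (1+ρ²)^{-(n-1)} dρ`. -/
def Iconst (n : ℕ) : ℝ := ∫ ρ in Set.Ioi (0 : ℝ), ρ ^ n / (1 + ρ ^ 2) ^ (n - 1)

/-- `ω_{n-1}`: the `(n−2)`-dimensional Hausdorff measure of the unit sphere
`S^{n-2} ⊆ ℝ^{n-1}`. -/
def omegaN (n : ℕ) : ℝ :=
  (μH[(n : ℝ) - 2] (Metric.sphere (0 : EuclideanSpace ℝ (Fin (n - 1))) 1)).toReal

/-- `φ_m(D) = ∫_D^∞ (t²−1)^{−m} dt`. -/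
def phiFun (m D : ℝ) : ℝ := ∫ t in Set.Ioi D, (t ^ 2 - 1) ^ (-m)

/-- `|∇f(x)|²`, the squared Euclidean norm of the gradient. -/
def gradSq (n : ℕ) (f : HalfPt n → ℝ) (x : HalfPt n) : ℝ :=
  (∑ i : Fin (n - 1), (fderiv ℝ f x (Pi.single i 1, (0 : ℝ))) ^ 2) +
    (fderiv ℝ f x ((0 : Fin (n - 1) → ℝ), 1)) ^ 2

/-- The energy of the bubble. -/
def energyE (n : ℕ) (K H D : ℝ) : ℝ :=
  cN n / 2 * (∫ x in {x : HalfPt n | 0 < x.2}, gradSq n (bubbleU n K D) x) +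
    ((n : ℝ) - 2) / (2 * (n : ℝ)) * |K| *
      (∫ x in {x : HalfPt n | 0 < x.2}, bubbleU n K D x ^ (2 * (n : ℝ) / ((n : ℝ) - 2))) -
    ((n : ℝ) - 2) * H *
      (∫ y : Fin (n - 1) → ℝ, bubbleU n K D (y, 0) ^ (2 * ((n : ℝ) - 1) / ((n : ℝ) - 2)))

/-- The Euclidean norm `|x|` on `ℝ^{n-1} × ℝ`. -/
def enormE (n : ℕ) (x : HalfPt n) : ℝ := Real.sqrt ((∑ i, (x.1 i) ^ 2) + x.2 ^ 2)

/-- The source term `E_h`. -/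
def Ehsrc (n : ℕ) (K D : ℝ) (h : Fin (n - 1) → Fin (n - 1) → ℝ) (x : HalfPt n) : ℝ :=
  (8 * ((n : ℝ) - 1) / ((n : ℝ) - 2)) *
    (∑ i : Fin (n - 1), ∑ j : Fin (n - 1),
      h i j *
        fderiv ℝ (fun y => fderiv ℝ (bubbleU n K D) y (Pi.single j 1, (0 : ℝ))) x
          (Pi.single i 1, (0 : ℝ))) * x.2

namespace JnAux

variable {n : ℕ} {K D : ℝ}

/-- coordinate functional -/
def Lc (n : ℕ) (i : Fin (n-1)) : HalfPt n →L[ℝ] ℝ :=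
  (ContinuousLinearMap.proj i).comp (ContinuousLinearMap.fst ℝ (Fin (n-1) → ℝ) ℝ)

def Ls (n : ℕ) : HalfPt n →L[ℝ] ℝ := ContinuousLinearMap.snd ℝ (Fin (n-1) → ℝ) ℝ

@[simp] lemma Lc_apply (i : Fin (n-1)) (v : HalfPt n) : Lc n i v = v.1 i := rfl
@[simp] lemma Ls_apply (v : HalfPt n) : Ls n v = v.2 := rfl

def Sf (n : ℕ) (x : HalfPt n) : ℝ := ∑ i, x.1 i ^ 2
def Pf (n : ℕ) (D : ℝ) (x : HalfPt n) : ℝ := Sf n x + x.2 ^ 2 + 1 - D ^ 2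

def DS (x : HalfPt n) : HalfPt n →L[ℝ] ℝ := ∑ i, (2 * x.1 i) • Lc n i
def DQ (D : ℝ) (x : HalfPt n) : HalfPt n →L[ℝ] ℝ := DS x + (2*(x.2+D)) • Ls n
def DP (x : HalfPt n) : HalfPt n →L[ℝ] ℝ := DS x + (2*x.2) • Ls n

lemma hasFDerivAt_coord (i : Fin (n-1)) (x : HalfPt n) :
    HasFDerivAt (fun y : HalfPt n => y.1 i) (Lc n i) x := (Lc n i).hasFDerivAt

lemma hasFDerivAt_sq_coord (i : Fin (n-1)) (x : HalfPt n) :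
    HasFDerivAt (fun y : HalfPt n => y.1 i ^ 2) ((2 * x.1 i) • Lc n i) x := by
  have h := (hasFDerivAt_coord i x).fun_mul (hasFDerivAt_coord i x)
  simpa [pow_two, two_mul, add_smul] using h

lemma hasFDerivAt_Sf (x : HalfPt n) : HasFDerivAt (Sf n) (DS x) x := by
  unfold Sf DS
  exact HasFDerivAt.fun_sum fun i _ => hasFDerivAt_sq_coord i x

lemma hasFDerivAt_QD (x : HalfPt n) : HasFDerivAt (QD n D) (DQ D x) x := by
  have h2 : HasFDerivAt (fun y : HalfPt n => (y.2 + D)^2) ((2*(x.2+D)) • Ls n) x := by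
    have h := (((Ls n).hasFDerivAt (x := x)).add_const D).fun_mul (((Ls n).hasFDerivAt (x := x)).add_const D)
    simpa [pow_two, two_mul, add_smul] using h
  exact ((hasFDerivAt_Sf x).add h2).sub_const 1

lemma hasFDerivAt_Pf (x : HalfPt n) : HasFDerivAt (Pf n D) (DP x) x := by
  have h2 : HasFDerivAt (fun y : HalfPt n => y.2^2) ((2*x.2) • Ls n) x := by
    have h := ((Ls n).hasFDerivAt (x := x)).fun_mul ((Ls n).hasFDerivAt (x := x))
    simpa [pow_two, two_mul, add_smul] using h
  exact (((hasFDerivAt_Sf x).add h2).add_const 1).sub_const (D^2)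

@[simp] lemma DS_applyT (x : HalfPt n) (i : Fin (n-1)) :
    DS x (Pi.single i 1, (0:ℝ)) = 2 * x.1 i := by
  simp [DS, Pi.single_apply, mul_ite, Finset.sum_ite_eq']

@[simp] lemma DS_applyN (x : HalfPt n) :
    DS x ((0 : Fin (n-1) → ℝ), (1:ℝ)) = 0 := by
  simp [DS]

@[simp] lemma DQ_applyT (x : HalfPt n) (i : Fin (n-1)) :
    DQ D x (Pi.single i 1, (0:ℝ)) = 2 * x.1 i := by
  simp [DQ]

@[simp] lemma DQ_applyN (x : HalfPt n) :
    DQ D x ((0 : Fin (n-1) → ℝ), (1:ℝ)) = 2*(x.2+D) := by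
  simp [DQ]

@[simp] lemma DP_applyT (x : HalfPt n) (i : Fin (n-1)) :
    DP x (Pi.single i 1, (0:ℝ)) = 2 * x.1 i := by
  simp [DP]

@[simp] lemma DP_applyN (x : HalfPt n) :
    DP x ((0 : Fin (n-1) → ℝ), (1:ℝ)) = 2*x.2 := by
  simp [DP]


/-- the exponent `a = -n/2` -/
def aexp (n : ℕ) : ℝ := -((n : ℝ)/2)

/-- the constant `c` -/
def Cc (n : ℕ) (K : ℝ) : ℝ :=
  alphaN n * |K| ^ (-(((n : ℝ) - 2) / 4)) * (((n : ℝ) - 2) / 2)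

lemma jNor_eq (x : HalfPt n) :
    jNor n K D x = Cc n K * (Pf n D x * QD n D x ^ aexp n) := by
  unfold jNor Cc Pf Sf aexp; ring_nf

lemma hasFDerivAt_jNor (x : HalfPt n) (hQ : QD n D x ≠ 0) :
    HasFDerivAt (jNor n K D)
      (Cc n K • (Pf n D x • ((aexp n * QD n D x ^ (aexp n - 1)) • DQ D x)
        + QD n D x ^ aexp n • DP x)) x := by
  have hfun : jNor n K D = fun y => Cc n K * (Pf n D y * QD n D y ^ aexp n) := by
    funext y; exact jNor_eq y
  rw [hfun]
  exact ((hasFDerivAt_Pf x).mul ((hasFDerivAt_QD x).rpow_const (Or.inl hQ))).const_mul _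

/-- value of the tangential derivative -/
def gT (n : ℕ) (K D : ℝ) (i : Fin (n-1)) (y : HalfPt n) : ℝ :=
  Cc n K * (Pf n D y * (aexp n * QD n D y ^ (aexp n - 1)) * (2 * y.1 i)
    + QD n D y ^ aexp n * (2 * y.1 i))

/-- value of the normal derivative -/
def gN (n : ℕ) (K D : ℝ) (y : HalfPt n) : ℝ :=
  Cc n K * (Pf n D y * (aexp n * QD n D y ^ (aexp n - 1)) * (2 * (y.2 + D))
    + QD n D y ^ aexp n * (2 * y.2))

lemma fderiv_jNor_T (y : HalfPt n) (hQ : QD n D y ≠ 0) (i : Fin (n-1)) :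
    fderiv ℝ (jNor n K D) y (Pi.single i 1, (0:ℝ)) = gT n K D i y := by
  rw [(hasFDerivAt_jNor y hQ).fderiv]
  simp [gT]
  ring

lemma fderiv_jNor_N (y : HalfPt n) (hQ : QD n D y ≠ 0) :
    fderiv ℝ (jNor n K D) y ((0 : Fin (n-1) → ℝ), (1:ℝ)) = gN n K D y := by
  rw [(hasFDerivAt_jNor y hQ).fderiv]
  simp [gN]
  ring

lemma continuous_QD : Continuous (QD n D) := by
  unfold QD
  fun_prop

lemma isOpen_QD_ne : IsOpen {y : HalfPt n | QD n D y ≠ 0} :=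
  isOpen_compl_singleton.preimage continuous_QD


lemma dd2_tangent (x : HalfPt n) (hQ : QD n D x ≠ 0) (i : Fin (n-1)) :
    dd2 n (jNor n K D) (Pi.single i 1, 0) x =
      Cc n K * (2 * QD n D x ^ aexp n
        + 8 * aexp n * x.1 i ^ 2 * QD n D x ^ (aexp n - 1)
        + 4 * aexp n * (aexp n - 1) * x.1 i ^ 2 * Pf n D x * QD n D x ^ (aexp n - 2)
        + 2 * aexp n * Pf n D x * QD n D x ^ (aexp n - 1)) := by
  unfold dd2
  have heq : (fun y => fderiv ℝ (jNor n K D) y (Pi.single i 1, (0:ℝ)))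
      =ᶠ[nhds x] gT n K D i := by
    filter_upwards [isOpen_QD_ne.mem_nhds hQ] with y hy using fderiv_jNor_T y hy i
  rw [heq.fderiv_eq]
  have hPd := hasFDerivAt_Pf (n := n) (D := D) x
  have hQd := hasFDerivAt_QD (n := n) (D := D) x
  have h1 := hQd.rpow_const (p := aexp n - 1) (Or.inl hQ)
  have h2 := hQd.rpow_const (p := aexp n) (Or.inl hQ)
  have hc := (hasFDerivAt_coord i x).const_mul (2:ℝ)
  have hG : HasFDerivAt (gT n K D i) _ x :=
    (((hPd.mul (h1.const_mul (aexp n))).mul hc).add (h2.mul hc)).const_mul (Cc n K)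
  rw [hG.fderiv]
  simp
  rw [show aexp n - 1 - 1 = aexp n - 2 from by ring]
  ring

lemma dd2_normal (x : HalfPt n) (hQ : QD n D x ≠ 0) :
    dd2 n (jNor n K D) ((0 : Fin (n-1) → ℝ), 1) x =
      Cc n K * (2 * QD n D x ^ aexp n
        + 8 * aexp n * (x.2 * (x.2 + D)) * QD n D x ^ (aexp n - 1)
        + 4 * aexp n * (aexp n - 1) * (x.2 + D) ^ 2 * Pf n D x * QD n D x ^ (aexp n - 2)
        + 2 * aexp n * Pf n D x * QD n D x ^ (aexp n - 1)) := by
  unfold dd2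
  have heq : (fun y => fderiv ℝ (jNor n K D) y ((0 : Fin (n-1) → ℝ), (1:ℝ)))
      =ᶠ[nhds x] gN n K D := by
    filter_upwards [isOpen_QD_ne.mem_nhds hQ] with y hy using fderiv_jNor_N y hy
  rw [heq.fderiv_eq]
  have hPd := hasFDerivAt_Pf (n := n) (D := D) x
  have hQd := hasFDerivAt_QD (n := n) (D := D) x
  have h1 := hQd.rpow_const (p := aexp n - 1) (Or.inl hQ)
  have h2 := hQd.rpow_const (p := aexp n) (Or.inl hQ)
  have hs := (Ls n).hasFDerivAt (x := x)
  have hc1 := (hs.add_const D).const_mul (2:ℝ)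
  have hc2 := hs.const_mul (2:ℝ)
  have hG : HasFDerivAt (gN n K D) _ x :=
    (((hPd.mul (h1.const_mul (aexp n))).mul hc1).add (h2.mul hc2)).const_mul (Cc n K)
  rw [hG.fderiv]
  simp
  rw [show aexp n - 1 - 1 = aexp n - 2 from by ring]
  ring

end JnAux

open JnAux in
theorem jn_solves_linearized_problem
    (n : ℕ) (hn : 4 ≤ n) (K H D : ℝ) (hK : K < 0) (hH : 0 < H)
    (hD : D = Real.sqrt ((n : ℝ) * ((n : ℝ) - 1)) * H / Real.sqrt |K|) (hD1 : 1 < D) :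
    (∀ x : HalfPt n, 0 < x.2 →
      -(cN n) * lap n (jNor n K D) x +
          (((n : ℝ) + 2) / ((n : ℝ) - 2)) * |K| *
            bubbleU n K D x ^ (4 / ((n : ℝ) - 2)) * jNor n K D x = 0) ∧
    (∀ y : Fin (n - 1) → ℝ,
      (2 / ((n : ℝ) - 2)) * (-(fderiv ℝ (jNor n K D) (y, 0) ((0 : Fin (n - 1) → ℝ), 1)))
        = ((n : ℝ) / ((n : ℝ) - 2)) * H *
            bubbleU n K D (y, 0) ^ (2 / ((n : ℝ) - 2)) * jNor n K D (y, 0)) := by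
  have hn4 : (4:ℝ) ≤ (n:ℝ) := by exact_mod_cast hn
  have hne2 : (n:ℝ) - 2 ≠ 0 := by linarith
  have hKpos : (0:ℝ) < |K| := abs_pos.mpr (ne_of_lt hK)
  have hB : (0:ℝ) ≤ 4*(n:ℝ)*((n:ℝ)-1) := by nlinarith
  constructor
  · intro x hx
    have hS : (0:ℝ) ≤ ∑ i, (x.1 i)^2 := Finset.sum_nonneg fun i _ => sq_nonneg _
    have hQpos : 0 < QD n D x := by
      have h1 : (1:ℝ) < x.2 + D := by linarith
      have h2 : (1:ℝ) < (x.2 + D)^2 := by nlinarith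
      unfold QD; linarith
    have hQne := ne_of_gt hQpos
    set a := aexp n with ha
    set c := Cc n K with hc
    set Q := QD n D x with hQdef
    set P := Pf n D x with hP
    -- the Laplacian
    have c1def : ∀ i : Fin (n-1), dd2 n (jNor n K D) (Pi.single i 1, 0) x =
        (c * (2 * Q ^ a + 2 * a * P * Q ^ (a-1)))
        + x.1 i ^ 2 * (c * (8 * a * Q ^ (a-1) + 4 * a * (a-1) * P * Q ^ (a-2))) := by
      intro i
      rw [dd2_tangent x hQne i]
      ring
    have hcard : ((Finset.univ : Finset (Fin (n-1))).card : ℝ) = (n:ℝ) - 1 := by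
      rw [Finset.card_univ, Fintype.card_fin, Nat.cast_sub (by omega : 1 ≤ n)]
      norm_num
    have hsum : (∑ i : Fin (n-1), dd2 n (jNor n K D) (Pi.single i 1, 0) x) =
        ((n:ℝ) - 1) * (c * (2 * Q ^ a + 2 * a * P * Q ^ (a-1)))
        + (∑ i, (x.1 i)^2) * (c * (8 * a * Q ^ (a-1) + 4 * a * (a-1) * P * Q ^ (a-2))) := by
      rw [Finset.sum_congr rfl (fun i _ => c1def i), Finset.sum_add_distrib,
        Finset.sum_const, ← Finset.sum_mul, nsmul_eq_mul, hcard]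
    have hlap : lap n (jNor n K D) x =
        ((n:ℝ) - 1) * (c * (2 * Q ^ a + 2 * a * P * Q ^ (a-1)))
        + (∑ i, (x.1 i)^2) * (c * (8 * a * Q ^ (a-1) + 4 * a * (a-1) * P * Q ^ (a-2)))
        + c * (2 * Q ^ a + 8 * a * (x.2 * (x.2 + D)) * Q ^ (a-1)
            + 4 * a * (a-1) * (x.2 + D)^2 * P * Q ^ (a-2) + 2 * a * P * Q ^ (a-1)) := by
      unfold lap
      rw [hsum, dd2_normal x hQne]
    -- power identities
    have e1 : Q ^ (a - 1) = Q ^ (a - 2) * Q :=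
      calc Q ^ (a-1) = Q ^ ((a-2)+1) := by congr 1; ring
      _ = Q ^ (a-2) * Q ^ (1:ℝ) := Real.rpow_add hQpos _ _
      _ = Q ^ (a-2) * Q := by rw [Real.rpow_one]
    have e2 : Q ^ a = Q ^ (a - 2) * Q ^ 2 :=
      calc Q ^ a = Q ^ ((a-2)+2) := by congr 1; ring
      _ = Q ^ (a-2) * Q ^ (2:ℝ) := Real.rpow_add hQpos _ _
      _ = Q ^ (a-2) * Q ^ 2 := by rw [Real.rpow_two]
    -- the bubble power
    have hU : bubbleU n K D x ^ (4/((n:ℝ)-2)) =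
        (4*(n:ℝ)*((n:ℝ)-1)) * |K|⁻¹ * (Q^2)⁻¹ := by
      unfold bubbleU alphaN
      rw [Real.mul_rpow (by positivity) (Real.rpow_nonneg hQpos.le _),
        Real.mul_rpow (Real.rpow_nonneg hB _) (Real.rpow_nonneg (abs_nonneg K) _),
        ← Real.rpow_mul hB, ← Real.rpow_mul (abs_nonneg K), ← Real.rpow_mul hQpos.le,
        show ((n:ℝ)-2)/4 * (4/((n:ℝ)-2)) = 1 by field_simp,
        show -(((n:ℝ)-2)/4) * (4/((n:ℝ)-2)) = -1 by field_simp,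
        show -(((n:ℝ)-2)/2) * (4/((n:ℝ)-2)) = -(2:ℝ) by field_simp; ring,
        Real.rpow_one, Real.rpow_neg_one, Real.rpow_neg hQpos.le, Real.rpow_two]
    have hj : jNor n K D x = c * (P * (Q ^ (a-2) * Q^2)) := by
      rw [jNor_eq, ← e2]
    have hQ2 : Q^2 ≠ 0 := pow_ne_zero 2 hQne
    have hterm : (((n:ℝ)+2)/((n:ℝ)-2)) * |K| *
          ((4*(n:ℝ)*((n:ℝ)-1)) * |K|⁻¹ * (Q^2)⁻¹) * (c * (P * (Q ^ (a-2) * Q^2)))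
        = (((n:ℝ)+2) * (4*(n:ℝ)*((n:ℝ)-1)) / ((n:ℝ)-2)) * (c * (P * Q ^ (a-2))) := by
      field_simp
    rw [hlap, hj, hU, e1, e2, hterm]
    generalize Q ^ (a-2) = E
    rw [ha, hP, hQdef]
    unfold cN aexp Pf Sf QD
    field_simp
    ring
  · intro y
    have hS : (0:ℝ) ≤ ∑ i, ((y,(0:ℝ)).1 i)^2 := Finset.sum_nonneg fun i _ => sq_nonneg _
    have hQpos : 0 < QD n D (y, 0) := by
      have h2 : (1:ℝ) < ((0:ℝ) + D)^2 := by nlinarith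
      unfold QD; simp only []
      simp at hS ⊢
      nlinarith
    have hQne := ne_of_gt hQpos
    have hKsqrt : (0:ℝ) < Real.sqrt |K| := Real.sqrt_pos.mpr hKpos
    rw [fderiv_jNor_N (y,0) hQne]
    have hU2 : bubbleU n K D (y,0) ^ (2/((n:ℝ)-2)) =
        (2 * Real.sqrt ((n:ℝ)*((n:ℝ)-1))) * (Real.sqrt |K|)⁻¹ * (QD n D (y,0))⁻¹ := by
      unfold bubbleU alphaN
      rw [Real.mul_rpow (by positivity) (Real.rpow_nonneg hQpos.le _),
        Real.mul_rpow (Real.rpow_nonneg hB _) (Real.rpow_nonneg (abs_nonneg K) _),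
        ← Real.rpow_mul hB, ← Real.rpow_mul (abs_nonneg K), ← Real.rpow_mul hQpos.le,
        show ((n:ℝ)-2)/4 * (2/((n:ℝ)-2)) = 1/2 by field_simp; ring,
        show -(((n:ℝ)-2)/4) * (2/((n:ℝ)-2)) = -(1/2:ℝ) by field_simp; ring,
        show -(((n:ℝ)-2)/2) * (2/((n:ℝ)-2)) = -1 by field_simp,
        Real.rpow_neg_one, Real.rpow_neg (abs_nonneg K), ← Real.sqrt_eq_rpow,
        ← Real.sqrt_eq_rpow,
        show (4:ℝ)*(n:ℝ)*((n:ℝ)-1) = 2^2 * ((n:ℝ)*((n:ℝ)-1)) by ring,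
        Real.sqrt_mul (by positivity), Real.sqrt_sq (by norm_num : (0:ℝ) ≤ 2)]
    rw [hU2, jNor_eq]
    have e1 : QD n D (y,0) ^ (aexp n) = QD n D (y,0) ^ (aexp n - 1) * QD n D (y,0) :=
      calc QD n D (y,0) ^ (aexp n) = QD n D (y,0) ^ ((aexp n - 1)+1) := by congr 1; ring
      _ = QD n D (y,0) ^ (aexp n - 1) * QD n D (y,0) ^ (1:ℝ) := Real.rpow_add hQpos _ _
      _ = QD n D (y,0) ^ (aexp n - 1) * QD n D (y,0) := by rw [Real.rpow_one]
    have hDval : Real.sqrt ((n:ℝ)*((n:ℝ)-1)) * H = D * Real.sqrt |K| := by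
      rw [hD]; field_simp
    rw [gN, e1]
    have hy2 : ((y, (0:ℝ)) : HalfPt n).2 = 0 := rfl
    simp only [hy2]
    have expand : (n:ℝ)/((n:ℝ)-2) * H *
          (2*Real.sqrt ((n:ℝ)*((n:ℝ)-1)) * (Real.sqrt |K|)⁻¹ * (QD n D (y,0))⁻¹) *
          (Cc n K * (Pf n D (y,0) * (QD n D (y,0) ^ (aexp n - 1) * QD n D (y,0))))
        = (n:ℝ)/((n:ℝ)-2) * (Real.sqrt ((n:ℝ)*((n:ℝ)-1)) * H) * 2 * (Real.sqrt |K|)⁻¹ *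
          ((QD n D (y,0))⁻¹ * QD n D (y,0)) *
          (Cc n K * Pf n D (y,0) * QD n D (y,0) ^ (aexp n - 1)) := by ring
    rw [expand, hDval, inv_mul_cancel₀ hQne]
    unfold aexp
    field_simp
    ring
end
end

section
/- For every x in the closed upper half-space the following identity holds: ((2−n)/2)·U(x) − ∇U(x)·(x + D·eₙ) + D·∂U/∂xₙ(x) = αₙ·|K|^{−(n−2)/4}·((n−2)/2)·(|x|² + 1 − D²)·(|x̃|² + (xₙ + D)² − 1)^{−n/2}, where eₙ is the n-th standard basis vector of ℝⁿ. -/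
open Real MeasureTheory

noncomputable section

theorem jn_identity
    (n : ℕ) (hn : 4 ≤ n) (K H D : ℝ) (hK : K < 0) (hH : 0 < H)
    (hD : D = Real.sqrt ((n : ℝ) * ((n : ℝ) - 1)) * H / Real.sqrt |K|) (hD1 : 1 < D) :
    ∀ x : HalfPt n, 0 ≤ x.2 →
      ((2 - (n : ℝ)) / 2) * bubbleU n K D x
          - fderiv ℝ (bubbleU n K D) x (x.1, x.2 + D)
          + D * fderiv ℝ (bubbleU n K D) x ((0 : Fin (n - 1) → ℝ), 1)
        = jNor n K D x := by
  intro x hx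
  set C : ℝ := alphaN n * |K| ^ (-(((n : ℝ) - 2) / 4)) with hC
  set r : ℝ := -(((n : ℝ) - 2) / 2) with hr
  have hQpos : 0 < QD n D x := by
    have hs : 0 ≤ ∑ i, (x.1 i) ^ 2 := Finset.sum_nonneg fun i _ => sq_nonneg _
    have h1 : (1 : ℝ) < x.2 + D := by linarith
    have h2 : (1 : ℝ) < (x.2 + D) ^ 2 := by nlinarith
    unfold QD; linarith
  set L : HalfPt n →L[ℝ] ℝ :=
    (∑ i : Fin (n - 1), (2 * x.1 i) •
        ((ContinuousLinearMap.proj i).comp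
          (ContinuousLinearMap.fst ℝ (Fin (n - 1) → ℝ) ℝ)))
      + (2 * (x.2 + D)) • ContinuousLinearMap.snd ℝ (Fin (n - 1) → ℝ) ℝ with hL
  have h1 : ∀ i : Fin (n - 1), HasFDerivAt (fun y : HalfPt n => (y.1 i) ^ 2)
      ((2 * x.1 i) • ((ContinuousLinearMap.proj i).comp
        (ContinuousLinearMap.fst ℝ (Fin (n - 1) → ℝ) ℝ))) x := by
    intro i
    have hb := ((ContinuousLinearMap.proj (R := ℝ) (φ := fun _ : Fin (n-1) => ℝ) i).comp
      (ContinuousLinearMap.fst ℝ (Fin (n - 1) → ℝ) ℝ)).hasFDerivAt (x := x)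
    have := hb.fun_mul hb
    simpa [pow_two, two_mul, add_smul] using this
  have h2 : HasFDerivAt (fun y : HalfPt n => (y.2 + D) ^ 2)
      ((2 * (x.2 + D)) • ContinuousLinearMap.snd ℝ (Fin (n - 1) → ℝ) ℝ) x := by
    have hb := ((ContinuousLinearMap.snd ℝ (Fin (n - 1) → ℝ) ℝ).hasFDerivAt
      (x := x)).add_const D
    have := hb.fun_mul hb
    simpa [pow_two, two_mul, add_smul] using this
  have hsum : HasFDerivAt (fun y : HalfPt n => ∑ i, (y.1 i) ^ 2)
      (∑ i : Fin (n - 1), (2 * x.1 i) • ((ContinuousLinearMap.proj i).comp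
        (ContinuousLinearMap.fst ℝ (Fin (n - 1) → ℝ) ℝ))) x :=
    HasFDerivAt.fun_sum fun i _ => h1 i
  have hQ : HasFDerivAt (QD n D) L x := by
    have := (hsum.add h2).sub_const 1
    exact this
  have hU : HasFDerivAt (bubbleU n K D) (C • ((r * QD n D x ^ (r - 1)) • L)) x := by
    have h0 : HasFDerivAt (fun y => C * QD n D y ^ r) (C • ((r * QD n D x ^ (r - 1)) • L)) x :=
      (hQ.rpow_const (p := r) (Or.inl hQpos.ne')).const_mul C
    exact h0
  rw [hU.fderiv]
  have hLeval1 : L (x.1, x.2 + D)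
      = 2 * (∑ i, (x.1 i) ^ 2) + 2 * (x.2 + D) * (x.2 + D) := by
    simp only [hL, ContinuousLinearMap.add_apply, ContinuousLinearMap.sum_apply,
      ContinuousLinearMap.smul_apply, ContinuousLinearMap.comp_apply,
      ContinuousLinearMap.coe_fst', ContinuousLinearMap.proj_apply,
      ContinuousLinearMap.coe_snd', smul_eq_mul]
    rw [Finset.mul_sum]
    congr 1
    exact Finset.sum_congr rfl fun i _ => by ring
  have hLeval2 : L ((0 : Fin (n - 1) → ℝ), 1) = 2 * (x.2 + D) := by
    simp [hL]
  simp only [ContinuousLinearMap.smul_apply, smul_eq_mul, hLeval1, hLeval2]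
  have hrm : -((n : ℝ) / 2) = r - 1 := by rw [hr]; ring
  have hQr : QD n D x ^ r = QD n D x ^ (r - 1) * QD n D x := by
    rw [← Real.rpow_add_one hQpos.ne']; ring_nf
  rw [jNor, hrm, ← hC]
  rw [bubbleU, ← hC, ← hr, hQr]
  unfold QD
  ring
end
end
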